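/- Let ℍ be the hyperbolic plane realized as the upper half-plane, and let A = {z ∈ ℍ : Re z = 0} be the imaginary axis. For p ∈ ℍ let q(p) ∈ A be the point with Im q(p) = |p| and Re q(p) = 0 (the nearest-point projection of p onto A). Then for all p₁, p₂ ∈ ℍ: sinh (dist p₁ p₂) ≥ cosh (dist p₁ (q p₁)) · sinh (dist (q p₁) (q p₂)). In particular, if dist p₁ A = ε > 0 and dist (q p₁) (q p₂) = t, then dist p₁ p₂ ≥ t + δ(t,ε) for a positive quantity δ(t,ε) = arsinh(cosh ε · sinh t) − t, which is increasing in t. -/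

import Mathlib

open Filter UpperHalfPlane Real

/-- The nearest-point projection of a point `p` of the upper half-plane onto the
imaginary axis `A = {z : Re z = 0}`: the point with real part `0` and imaginary part
the Euclidean modulus `|p|`. -/
noncomputable def axisProj (p : ℍ) : ℍ :=
  ⟨Complex.I * (‖(p : ℂ)‖ : ℂ), by
    have hne : (p : ℂ) ≠ 0 := p.ne_zero
    simp [Complex.mul_im, hne, norm_pos_iff.mpr hne]⟩

lemma axisProj_coe (p : ℍ) : ((axisProj p : ℍ) : ℂ) = Complex.I * (‖(p : ℂ)‖ : ℂ) :=
  rfl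

lemma axisProj_im (p : ℍ) : (axisProj p).im = ‖(p : ℂ)‖ := by
  simp [UpperHalfPlane.im, axisProj, Complex.mul_im]

lemma sinh_dist' (z w : ℍ) :
    Real.sinh (dist z w) =
      dist (z : ℂ) w * dist (z : ℂ) (starRingEnd ℂ (w : ℂ)) / (2 * z.im * w.im) := by
  have h : dist z w = 2 * (dist z w / 2) := by ring
  have h1 : (0:ℝ) < z.im := z.im_pos
  have h2 : (0:ℝ) < w.im := w.im_pos
  have hs : Real.sqrt (z.im * w.im) ^ 2 = z.im * w.im := Real.sq_sqrt (by positivity)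
  have hspos : (0:ℝ) < Real.sqrt (z.im * w.im) := Real.sqrt_pos.2 (by positivity)
  rw [h, Real.sinh_two_mul, UpperHalfPlane.sinh_half_dist, UpperHalfPlane.cosh_half_dist]
  set s := Real.sqrt (z.im * w.im) with hsdef
  field_simp
  linear_combination (-1 * dist (z:ℂ) w * dist (z:ℂ) (starRingEnd ℂ (w:ℂ))) * hs

lemma cosh_dist_axisProj (p : ℍ) :
    Real.cosh (dist p (axisProj p)) = ‖(p : ℂ)‖ / p.im := by
  have h1 : (0:ℝ) < p.im := p.im_pos
  have hr : 0 < ‖(p : ℂ)‖ := norm_pos_iff.mpr p.ne_zero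
  have hre : p.re ^ 2 + p.im ^ 2 = ‖(p : ℂ)‖ ^ 2 := by
    rw [Complex.sq_norm, Complex.normSq_apply]
    simp only [UpperHalfPlane.coe_re, UpperHalfPlane.coe_im]
    ring
  rw [UpperHalfPlane.cosh_dist, axisProj_im, axisProj_coe]
  have hd : dist (p : ℂ) (Complex.I * (‖(p : ℂ)‖ : ℂ)) ^ 2 =
      p.re ^ 2 + (p.im - ‖(p : ℂ)‖) ^ 2 := by
    rw [Complex.dist_eq, Complex.sq_norm, Complex.normSq_apply]
    simp only [Complex.sub_re, Complex.sub_im, Complex.mul_re, Complex.mul_im, Complex.I_re, Complex.I_im, Complex.ofReal_re, Complex.ofReal_im, UpperHalfPlane.coe_re, UpperHalfPlane.coe_im]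
    ring
  rw [hd]
  field_simp
  linear_combination hre

/-- The key algebraic inequality, after squaring: a perfect-square identity. -/
lemma key_ineq (x1 y1 x2 y2 r1 r2 D1 D2 : ℝ) (hy1 : 0 < y1) (hy2 : 0 < y2)
    (hr1 : 0 < r1) (hr2 : 0 < r2)
    (hr1s : r1 ^ 2 = x1 ^ 2 + y1 ^ 2) (hr2s : r2 ^ 2 = x2 ^ 2 + y2 ^ 2)
    (hD1 : 0 ≤ D1) (hD2 : 0 ≤ D2)
    (hD1s : D1 ^ 2 = (x1 - x2) ^ 2 + (y1 - y2) ^ 2)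
    (hD2s : D2 ^ 2 = (x1 - x2) ^ 2 + (y1 + y2) ^ 2) :
    r1 / y1 * (|r1 - r2| * (r1 + r2) / (2 * r1 * r2)) ≤ D1 * D2 / (2 * y1 * y2) := by
  have hA : |r1 - r2| ^ 2 = (r1 - r2) ^ 2 := sq_abs _
  have hAnn : 0 ≤ |r1 - r2| := abs_nonneg _
  have key : y2 * (|r1 - r2| * (r1 + r2)) ≤ r2 * (D1 * D2) := by
    apply le_of_pow_le_pow_left₀ two_ne_zero (by positivity)
    have e1 : (y2 * (|r1 - r2| * (r1 + r2))) ^ 2 = y2 ^ 2 * ((r1 - r2) ^ 2 * (r1 + r2) ^ 2) := by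
      rw [mul_pow, mul_pow, hA]
    have e2 : (r2 * (D1 * D2)) ^ 2 = r2 ^ 2 * (D1 ^ 2 * D2 ^ 2) := by ring
    have hr12 : r1 ^ 2 - r2 ^ 2 = (x1 ^ 2 + y1 ^ 2) - (x2 ^ 2 + y2 ^ 2) := by linarith
    have e3 : (r1 - r2) ^ 2 * (r1 + r2) ^ 2 = ((x1 ^ 2 + y1 ^ 2) - (x2 ^ 2 + y2 ^ 2)) ^ 2 := by
      rw [← hr12]; ring
    rw [e1, e2, hD1s, hD2s, hr2s, e3]
    nlinarith [sq_nonneg ((x2 - 2 * x1) * (x2 ^ 2 + y2 ^ 2) + x2 * (x1 ^ 2 + y1 ^ 2))]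
  rw [div_mul_div_comm, div_le_div_iff₀ (by positivity) (by positivity)]
  nlinarith [mul_le_mul_of_nonneg_left key (le_of_lt (mul_pos hy1 (mul_pos hr1 hr1)))]

theorem hyperbolic_projection_inequality :
    (∀ p₁ p₂ : ℍ,
      Real.cosh (dist p₁ (axisProj p₁)) * Real.sinh (dist (axisProj p₁) (axisProj p₂)) ≤
        Real.sinh (dist p₁ p₂)) ∧
    (∀ (p₁ p₂ : ℍ) (ε t : ℝ), 0 < ε → dist p₁ (axisProj p₁) = ε →
      dist (axisProj p₁) (axisProj p₂) = t →
      t + (Real.arsinh (Real.cosh ε * Real.sinh t) - t) ≤ dist p₁ p₂) ∧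
    (∀ ε t : ℝ, 0 < ε → 0 < t →
      0 < Real.arsinh (Real.cosh ε * Real.sinh t) - t) ∧
    (∀ ε : ℝ, 0 < ε →
      StrictMonoOn (fun t : ℝ => Real.arsinh (Real.cosh ε * Real.sinh t) - t)
        (Set.Ici 0)) := by
  have main : ∀ p₁ p₂ : ℍ,
      Real.cosh (dist p₁ (axisProj p₁)) * Real.sinh (dist (axisProj p₁) (axisProj p₂)) ≤
        Real.sinh (dist p₁ p₂) := by
    intro p₁ p₂
    set r1 := ‖(p₁ : ℂ)‖ with hr1def
    set r2 := ‖(p₂ : ℂ)‖ with hr2def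
    have hr1 : 0 < r1 := norm_pos_iff.mpr p₁.ne_zero
    have hr2 : 0 < r2 := norm_pos_iff.mpr p₂.ne_zero
    have hy1 : (0:ℝ) < p₁.im := p₁.im_pos
    have hy2 : (0:ℝ) < p₂.im := p₂.im_pos
    rw [cosh_dist_axisProj, sinh_dist', sinh_dist']
    have himq1 : (axisProj p₁).im = r1 := axisProj_im p₁
    have himq2 : (axisProj p₂).im = r2 := axisProj_im p₂
    have hd1 : dist ((axisProj p₁ : ℍ) : ℂ) ((axisProj p₂ : ℍ) : ℂ) = |r1 - r2| := by
      rw [axisProj_coe, axisProj_coe, Complex.dist_eq, ← mul_sub, norm_mul, Complex.norm_I,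
        one_mul, ← Complex.ofReal_sub, Complex.norm_real, Real.norm_eq_abs]
    have hd2 : dist ((axisProj p₁ : ℍ) : ℂ) (starRingEnd ℂ ((axisProj p₂ : ℍ) : ℂ)) = r1 + r2 := by
      rw [axisProj_coe, axisProj_coe, Complex.dist_eq]
      have : Complex.I * (r1 : ℂ) - starRingEnd ℂ (Complex.I * (r2 : ℂ)) =
          Complex.I * ((r1 : ℂ) + (r2 : ℂ)) := by
        simp [Complex.ext_iff]
      rw [this, norm_mul, Complex.norm_I, one_mul, ← Complex.ofReal_add, Complex.norm_real, Real.norm_eq_abs]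
      exact abs_of_nonneg (by positivity)
    rw [hd1, hd2, himq1, himq2]
    have hre1 : r1 ^ 2 = p₁.re ^ 2 + p₁.im ^ 2 := by
      rw [hr1def, Complex.sq_norm, Complex.normSq_apply]
      simp only [Complex.sub_re, Complex.sub_im, Complex.conj_re, Complex.conj_im, UpperHalfPlane.coe_re, UpperHalfPlane.coe_im]; ring
    have hre2 : r2 ^ 2 = p₂.re ^ 2 + p₂.im ^ 2 := by
      rw [hr2def, Complex.sq_norm, Complex.normSq_apply]
      simp only [Complex.sub_re, Complex.sub_im, Complex.conj_re, Complex.conj_im, UpperHalfPlane.coe_re, UpperHalfPlane.coe_im]; ring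
    have hD1s : dist (p₁ : ℂ) (p₂ : ℂ) ^ 2 = (p₁.re - p₂.re) ^ 2 + (p₁.im - p₂.im) ^ 2 := by
      rw [Complex.dist_eq, Complex.sq_norm, Complex.normSq_apply]
      simp only [Complex.sub_re, Complex.sub_im, Complex.conj_re, Complex.conj_im, UpperHalfPlane.coe_re, UpperHalfPlane.coe_im]; ring
    have hD2s : dist (p₁ : ℂ) (starRingEnd ℂ (p₂ : ℂ)) ^ 2 =
        (p₁.re - p₂.re) ^ 2 + (p₁.im + p₂.im) ^ 2 := by
      rw [Complex.dist_eq, Complex.sq_norm, Complex.normSq_apply]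
      simp only [Complex.sub_re, Complex.sub_im, Complex.conj_re, Complex.conj_im, UpperHalfPlane.coe_re, UpperHalfPlane.coe_im]; ring
    exact key_ineq p₁.re p₁.im p₂.re p₂.im r1 r2 _ _ hy1 hy2 hr1 hr2 hre1 hre2
      dist_nonneg dist_nonneg hD1s hD2s
  refine ⟨main, ?_, ?_, ?_⟩
  · intro p₁ p₂ ε t hε h1 h2
    have h := main p₁ p₂
    rw [h1, h2] at h
    have : Real.arsinh (Real.cosh ε * Real.sinh t) ≤ Real.arsinh (Real.sinh (dist p₁ p₂)) :=
      Real.arsinh_le_arsinh.2 h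
    rw [Real.arsinh_sinh] at this
    linarith
  · intro ε t hε ht
    have hc : 1 < Real.cosh ε := Real.one_lt_cosh.2 (ne_of_gt hε)
    have hs : 0 < Real.sinh t := Real.sinh_pos_iff.2 ht
    have : Real.sinh t < Real.cosh ε * Real.sinh t := by nlinarith
    have h2 : Real.arsinh (Real.sinh t) < Real.arsinh (Real.cosh ε * Real.sinh t) :=
      Real.arsinh_lt_arsinh.2 this
    rw [Real.arsinh_sinh] at h2
    linarith
  · intro ε hε
    have hc : 1 < Real.cosh ε := Real.one_lt_cosh.2 (ne_of_gt hε)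
    have : StrictMono (fun t : ℝ => Real.arsinh (Real.cosh ε * Real.sinh t) - t) := by
      apply strictMono_of_deriv_pos
      intro x
      set c := Real.cosh ε
      have hder : HasDerivAt (fun t : ℝ => Real.arsinh (c * Real.sinh t) - t)
          ((Real.sqrt (1 + (c * Real.sinh x) ^ 2))⁻¹ * (c * Real.cosh x) - 1) x := by
        have h1 : HasDerivAt (fun t : ℝ => c * Real.sinh t) (c * Real.cosh x) x :=
          (Real.hasDerivAt_sinh x).const_mul c
        exact ((Real.hasDerivAt_arsinh _).comp x h1).sub (hasDerivAt_id x)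
      rw [hder.deriv]
      have hcosh : 0 < Real.cosh x := Real.cosh_pos x
      have hcc : 0 < c := lt_trans one_pos hc
      have hsq : Real.sqrt (1 + (c * Real.sinh x) ^ 2) < c * Real.cosh x := by
        rw [Real.sqrt_lt' (by positivity)]
        have h2 : (c * Real.cosh x) ^ 2 = c ^ 2 * (Real.sinh x ^ 2 + 1) := by
          rw [mul_pow, Real.cosh_sq x]
        rw [h2]
        nlinarith [sq_nonneg (Real.sinh x)]
      have hspos : 0 < Real.sqrt (1 + (c * Real.sinh x) ^ 2) :=
        Real.sqrt_pos.2 (by positivity)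
      have : 1 < (Real.sqrt (1 + (c * Real.sinh x) ^ 2))⁻¹ * (c * Real.cosh x) := by
        rw [inv_mul_eq_div, lt_div_iff₀ hspos, one_mul]
        exact hsq
      linarith
    exact this.strictMonoOn _
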